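/- For integers t ≥ 1 and any graph G with a maximum stable set S (with |S| = α(G) ≥ t), the vertex set of G is the union of at most binom(α(G)+1, t) ≤ α(G)^t sets, each of which includes no stable set of size s, provided G is K_{s,t}-free with s ≥ t ≥ 2. -/

import Mathlib

open SimpleGraph Finset

/-- A stable (independent) set: pairwise nonadjacent vertices. -/
def IsStableSet {V : Type*} (G : SimpleGraph V) (T : Finset V) : Prop :=
  ∀ ⦃u⦄, u ∈ T → ∀ ⦃v⦄, v ∈ T → u ≠ v → ¬G.Adj u v

/-- `G` is `K_{s,t}`-free. -/
def KstFree {V : Type*} (G : SimpleGraph V) (s t : ℕ) : Prop :=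
  ¬ ∃ A B : Finset V, Disjoint A B ∧ A.card = s ∧ B.card = t ∧
      IsStableSet G A ∧ IsStableSet G B ∧ ∀ a ∈ A, ∀ b ∈ B, G.Adj a b

/-- If `G` is `K_{s,t}`-free with `s ≥ t ≥ 2` and has a maximum stable set `S` with
`|S| = α(G) ≥ t`, then `V(G)` is the union of at most `binom(α(G)+1,t) ≤ α(G)^t`
sets, each containing no stable set of size `s`. -/
theorem stmt_5 {V : Type*} [Fintype V] (G : SimpleGraph V) (s t : ℕ) (hts : t ≤ s)
    (ht : 2 ≤ t) (hfree : KstFree G s t) (S : Finset V) (hS : IsStableSet G S)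
    (hSmax : ∀ T : Finset V, IsStableSet G T → T.card ≤ S.card) (hSt : t ≤ S.card) :
    (S.card + 1).choose t ≤ S.card ^ t ∧
    ∃ F : Finset (Finset V),
      F.card ≤ (S.card + 1).choose t ∧
      (∀ v : V, ∃ A ∈ F, v ∈ A) ∧
      ∀ A ∈ F, ¬ ∃ T : Finset V, T ⊆ A ∧ IsStableSet G T ∧ T.card = s := by
  classical
  set α := S.card with hα
  have hα1 : 1 ≤ α := le_trans (by omega) hSt
  constructor
  · -- arithmetic part
    have h1 : t * (α + 1).choose t = (α + 1) * α.choose (t - 1) := by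
      obtain ⟨k, rfl⟩ : ∃ k, t = k + 1 := ⟨t - 1, by omega⟩
      simpa [Nat.mul_comm] using (Nat.add_one_mul_choose_eq α k).symm
    have h2 : α.choose (t - 1) ≤ α ^ (t - 1) := Nat.choose_le_pow _ _
    have key : 2 * (α + 1).choose t ≤ 2 * α ^ t := by
      calc 2 * (α + 1).choose t ≤ t * (α + 1).choose t :=
            Nat.mul_le_mul_right _ ht
        _ = (α + 1) * α.choose (t - 1) := h1
        _ ≤ (α + 1) * α ^ (t - 1) := Nat.mul_le_mul_left _ h2
        _ ≤ (2 * α) * α ^ (t - 1) := Nat.mul_le_mul_right _ (by omega)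
        _ = 2 * (α * α ^ (t - 1)) := by ring
        _ = 2 * α ^ t := by
            congr 1
            rw [← pow_succ']
            congr 1
            omega
    omega
  · -- the covering family
    set A : Finset V → Finset V :=
      fun X => X ∪ Finset.univ.filter (fun v => v ∉ S ∧ ∀ u ∈ S, G.Adj v u → u ∈ X) with hAdef
    set C : Finset V → Finset V :=
      fun X => Finset.univ.filter (fun v => v ∉ S ∧ ∀ u ∈ X, G.Adj v u) with hCdef
    refine ⟨(S.powersetCard (t - 1)).image A ∪ (S.powersetCard t).image C, ?_, ?_, ?_⟩
    · -- cardinality bound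
      have hc : (α + 1).choose t = α.choose (t - 1) + α.choose t := by
        obtain ⟨k, rfl⟩ : ∃ k, t = k + 1 := ⟨t - 1, by omega⟩
        simp [Nat.choose_succ_succ]
      calc ((S.powersetCard (t - 1)).image A ∪ (S.powersetCard t).image C).card
          ≤ ((S.powersetCard (t - 1)).image A).card + ((S.powersetCard t).image C).card :=
            card_union_le _ _
        _ ≤ (S.powersetCard (t - 1)).card + (S.powersetCard t).card :=
            Nat.add_le_add (card_image_le) (card_image_le)
        _ = α.choose (t - 1) + α.choose t := by simp [card_powersetCard, hα]
        _ = (α + 1).choose t := hc.symm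
    · -- coverage
      intro v
      by_cases hv : v ∈ S
      · obtain ⟨X, hX1, hX2, hX3⟩ :=
          exists_subsuperset_card_eq (t := S) (n := t - 1) (Finset.singleton_subset_iff.2 hv)
            (by simp; omega) (by omega)
        refine ⟨A X, ?_, ?_⟩
        · exact mem_union_left _ (mem_image_of_mem _ (mem_powersetCard.2 ⟨hX2, hX3⟩))
        · exact mem_union_left _ (hX1 (mem_singleton_self v))
      · set N := S.filter (fun u => G.Adj v u) with hN
        by_cases hNc : N.card ≤ t - 1
        · obtain ⟨X, hX1, hX2, hX3⟩ :=
            exists_subsuperset_card_eq (n := t - 1) (filter_subset _ S) hNc (by omega)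
          refine ⟨A X, ?_, ?_⟩
          · exact mem_union_left _ (mem_image_of_mem _ (mem_powersetCard.2 ⟨hX2, hX3⟩))
          · refine mem_union_right _ (mem_filter.2 ⟨mem_univ _, hv, fun u hu hadj => ?_⟩)
            exact hX1 (mem_filter.2 ⟨hu, hadj⟩)
        · obtain ⟨X, hX1, hX2⟩ := exists_subset_card_eq (s := N) (n := t) (by omega)
          refine ⟨C X, ?_, ?_⟩
          · refine mem_union_right _ (mem_image_of_mem _ (mem_powersetCard.2
              ⟨hX1.trans (filter_subset _ S), hX2⟩))
          · refine mem_filter.2 ⟨mem_univ _, hv, fun u hu => ?_⟩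
            exact (mem_filter.1 (hX1 hu)).2
    · -- each set has no stable set of size s
      rintro B hB ⟨T, hTB, hT, hTs⟩
      rcases mem_union.1 hB with hB | hB
      · -- B = A X for some (t-1)-subset X of S
        obtain ⟨X, hXmem, rfl⟩ := mem_image.1 hB
        obtain ⟨hXS, hXc⟩ := mem_powersetCard.1 hXmem
        -- build large stable set (S \ X) ∪ T
        have hd : Disjoint (S \ X) T := by
          rw [Finset.disjoint_left]
          intro u hu huT
          rcases mem_sdiff.1 hu with ⟨huS, huX⟩
          rcases mem_union.1 (hTB huT) with h | h
          · exact huX h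
          · exact (mem_filter.1 h).2.1 huS
        have hstab : IsStableSet G ((S \ X) ∪ T) := by
          intro u hu v hv hne hadj
          have key : ∀ a b : V, a ∈ S \ X → b ∈ T → G.Adj a b → False := by
            intro a b ha hb hab
            rcases mem_sdiff.1 ha with ⟨haS, haX⟩
            rcases mem_union.1 (hTB hb) with h | h
            · exact hS haS (hXS h) (G.ne_of_adj hab) hab
            · exact haX ((mem_filter.1 h).2.2 a haS (G.adj_symm hab))
          rcases mem_union.1 hu with hu' | hu' <;> rcases mem_union.1 hv with hv' | hv'
          · exact hS (mem_sdiff.1 hu').1 (mem_sdiff.1 hv').1 hne hadj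
          · exact key u v hu' hv' hadj
          · exact key v u hv' hu' (G.adj_symm hadj)
          · exact hT hu' hv' hne hadj
        have hcard : ((S \ X) ∪ T).card = (α - (t - 1)) + s := by
          rw [card_union_of_disjoint hd, card_sdiff_of_subset hXS, hXc, hTs]
        have := hSmax _ hstab
        rw [hcard] at this
        omega
      · -- B = C X for some t-subset X of S
        obtain ⟨X, hXmem, rfl⟩ := mem_image.1 hB
        obtain ⟨hXS, hXc⟩ := mem_powersetCard.1 hXmem
        refine hfree ⟨T, X, ?_, hTs, hXc, hT, ?_, ?_⟩
        · rw [Finset.disjoint_left]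
          intro a haT haX
          exact (mem_filter.1 (hTB haT)).2.1 (hXS haX)
        · intro u hu v hv hne hadj
          exact hS (hXS hu) (hXS hv) hne hadj
        · intro a haT b hbX
          exact (mem_filter.1 (hTB haT)).2.2 b hbX
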